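/- arXiv:math/0602104 — 6 statements merged into one kernel-verified Lean document; each statement's English description precedes it below -/
import Mathlib

section
/- Let x = (a_i)_{i∈I} and y = (b_i)_{i∈I} be elements of A. Then x and y are free over D in (A, E) if and only if, for every i ∈ I, the elements a_i and b_i are free in the noncommutative probability space (A_i, φ_i). -/
/-- The diagonal embedding `ι : (I → ℂ) → Π i, A i`, `ι d = (d i • 1)_{i}`. -/
noncomputable def diag {I : Type*} (A : I → Type*) [∀ i, Ring (A i)]
    [∀ i, Algebra ℂ (A i)] (d : I → ℂ) : ∀ i, A i :=
  fun i => d i • (1 : A i)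

/-- The componentwise conditional expectation `E : Π i, A i → (I → ℂ)`. -/
noncomputable def condExp {I : Type*} {A : I → Type*} [∀ i, Ring (A i)]
    [∀ i, Algebra ℂ (A i)] (φ : ∀ i, A i →ₗ[ℂ] ℂ) (x : ∀ i, A i) : I → ℂ :=
  fun i => φ i (x i)

/-- Two subalgebras `B₁, B₂` of `A = Π i, A i` are free over `D` with respect to
`E = condExp φ`: every alternating product of `E`-centered elements is `E`-centered. -/
def FreeOverD {I : Type*} {A : I → Type*} [∀ i, Ring (A i)] [∀ i, Algebra ℂ (A i)]
    (φ : ∀ i, A i →ₗ[ℂ] ℂ) (B₁ B₂ : Subalgebra ℂ (∀ i, A i)) : Prop :=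
  ∀ (n : ℕ), 1 ≤ n → ∀ (y : Fin n → ∀ i, A i) (c : Fin n → Bool),
    (∀ k, y k ∈ (if c k then B₁ else B₂)) →
    (∀ (k : Fin n) (h : (k : ℕ) + 1 < n), c k ≠ c ⟨(k : ℕ) + 1, h⟩) →
    (∀ k, condExp φ (y k) = 0) →
    condExp φ (List.ofFn y).prod = 0

/-- Two elements `x, y ∈ A` are free over `D` if the unital subalgebras generated by
`{x} ∪ ι(D)` and `{y} ∪ ι(D)` are free over `D`. -/
def ElemFreeOverD {I : Type*} {A : I → Type*} [∀ i, Ring (A i)] [∀ i, Algebra ℂ (A i)]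
    (φ : ∀ i, A i →ₗ[ℂ] ℂ) (x y : ∀ i, A i) : Prop :=
  FreeOverD φ (Algebra.adjoin ℂ ({x} ∪ Set.range (diag A)))
    (Algebra.adjoin ℂ ({y} ∪ Set.range (diag A)))

/-- Two unital subalgebras of a noncommutative probability space `(B, φ)` are free. -/
def FreeSubalgebras {B : Type*} [Ring B] [Algebra ℂ B] (φ : B →ₗ[ℂ] ℂ)
    (B₁ B₂ : Subalgebra ℂ B) : Prop :=
  ∀ (n : ℕ), 1 ≤ n → ∀ (y : Fin n → B) (c : Fin n → Bool),
    (∀ k, y k ∈ (if c k then B₁ else B₂)) →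
    (∀ (k : Fin n) (h : (k : ℕ) + 1 < n), c k ≠ c ⟨(k : ℕ) + 1, h⟩) →
    (∀ k, φ (y k) = 0) →
    φ (List.ofFn y).prod = 0

/-- Two elements of a noncommutative probability space `(B, φ)` are free if the unital
subalgebras they generate are free. -/
def FreePair {B : Type*} [Ring B] [Algebra ℂ B] (φ : B →ₗ[ℂ] ℂ) (a b : B) : Prop :=
  FreeSubalgebras φ (Algebra.adjoin ℂ {a}) (Algebra.adjoin ℂ {b})

/-- `x = (a_i)` and `y = (b_i)` are free over `D` in `(A, E)` iff
for every `i`, `a_i` and `b_i` are free in `(A_i, φ_i)`. -/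
theorem elemFreeOverD_iff_forall_freePair
    {I : Type*} [Nonempty I] {A : I → Type*} [∀ i, Ring (A i)]
    [∀ i, Algebra ℂ (A i)] (φ : ∀ i, A i →ₗ[ℂ] ℂ) (hφ : ∀ i, φ i 1 = 1)
    (x y : ∀ i, A i) :
    ElemFreeOverD φ x y ↔ ∀ i, FreePair (φ i) (x i) (y i) := by
  classical
  constructor
  · intro h i n hn b c hb hc hcent
    set X : Fin n → ∀ j, A j := fun k => if c k then x else y with hX
    have hb' : ∀ k, b k ∈ Algebra.adjoin ℂ {X k i} := by
      intro k
      have hk := hb k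
      by_cases hck : c k <;> simp only [hX, hck, if_true, if_false] at hk ⊢ <;> exact hk
    have hp : ∀ k, ∃ p : Polynomial ℂ, Polynomial.aeval (X k i) p = b k := by
      intro k
      have hk := hb' k
      rw [Algebra.adjoin_singleton_eq_range_aeval] at hk
      exact hk
    choose p hp using hp
    set e : I → ℂ := fun j => if j = i then 1 else 0 with he
    set δ : ∀ j, A j := diag A e with hδ
    set z : Fin n → ∀ j, A j := fun k => δ * Polynomial.aeval (X k) (p k) with hz
    have hwi : ∀ k, (Polynomial.aeval (X k) (p k) : ∀ j, A j) i = b k := by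
      intro k
      have := Polynomial.aeval_algHom_apply (Pi.evalAlgHom ℂ A i) (X k) (p k)
      simpa [Pi.evalAlgHom_apply, hp k] using this.symm
    have hzi : ∀ k, z k i = b k := by
      intro k
      simp only [hz, Pi.mul_apply, hδ, diag, he, eq_self_iff_true, if_true, one_smul, one_mul]
      exact hwi k
    have hzj : ∀ k j, j ≠ i → z k j = 0 := by
      intro k j hj
      simp [hz, Pi.mul_apply, hδ, diag, he, hj]
    have hmem : ∀ k, z k ∈ (if c k then
        Algebra.adjoin ℂ ({x} ∪ Set.range (diag A)) else
        Algebra.adjoin ℂ ({y} ∪ Set.range (diag A))) := by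
      intro k
      have hδmem : ∀ (w : ∀ j, A j), δ ∈ Algebra.adjoin ℂ ({w} ∪ Set.range (diag A)) :=
        fun w => Algebra.subset_adjoin (Set.mem_union_right _ ⟨e, rfl⟩)
      have haev : ∀ (w : ∀ j, A j) (q : Polynomial ℂ),
          Polynomial.aeval w q ∈ Algebra.adjoin ℂ ({w} ∪ Set.range (diag A)) := by
        intro w q
        have h1 : Polynomial.aeval w q ∈ Algebra.adjoin ℂ {w} := by
          rw [Algebra.adjoin_singleton_eq_range_aeval]
          exact ⟨q, rfl⟩
        exact Algebra.adjoin_mono Set.subset_union_left h1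
      by_cases hck : c k <;>
        simp only [hck, if_true, if_false] <;>
        [skip; skip] <;>
        · have hXk : X k = (if c k then x else y) := rfl
          rw [hz]
          simp only [hXk, hck, if_true, if_false]
          exact Subalgebra.mul_mem _ (hδmem _) (haev _ _)
    have hzcent : ∀ k, condExp φ (z k) = 0 := by
      intro k
      funext j
      by_cases hj : j = i
      · subst hj
        simp only [condExp, hzi k, Pi.zero_apply]
        exact hcent k
      · simp [condExp, hzj k j hj]
    have hE := h n hn z c hmem hc hzcent
    have hEi := congrFun hE i
    have hprod : (List.ofFn z).prod i = (List.ofFn b).prod := by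
      rw [show (List.ofFn b) = List.map (fun w => w i) (List.ofFn z) by
        rw [List.map_ofFn]; exact congrArg List.ofFn (funext fun k => (hzi k).symm)]
      exact map_list_prod (Pi.evalRingHom A i) (List.ofFn z)
    simpa [condExp, hprod] using hEi
  · intro h n hn z c hz hc hcent
    funext i
    have hmap : ∀ (w : ∀ j, A j),
        (Algebra.adjoin ℂ ({w} ∪ Set.range (diag A))).map (Pi.evalAlgHom ℂ A i)
          ≤ Algebra.adjoin ℂ {w i} := by
      intro w
      rw [AlgHom.map_adjoin]
      apply Algebra.adjoin_le
      rintro a ⟨s, hs, rfl⟩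
      rcases hs with hs | ⟨d, rfl⟩
      · rcases hs with rfl
        exact Algebra.subset_adjoin rfl
      · have : (Pi.evalAlgHom ℂ A i) (diag A d) = algebraMap ℂ (A i) (d i) := by
          simp [Pi.evalAlgHom_apply, diag, Algebra.algebraMap_eq_smul_one]
        rw [this]
        exact Subalgebra.algebraMap_mem _ _
    have hmem : ∀ k, z k i ∈ (if c k then
        Algebra.adjoin ℂ {x i} else Algebra.adjoin ℂ {y i}) := by
      intro k
      have hk := hz k
      by_cases hck : c k <;> simp only [hck, if_true, if_false] at hk ⊢
      · exact hmap x ⟨z k, hk, rfl⟩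
      · exact hmap y ⟨z k, hk, rfl⟩
    have hcent' : ∀ k, φ i (z k i) = 0 := fun k => congrFun (hcent k) i
    have := h i n hn (fun k => z k i) c hmem hc hcent'
    have hprod : (List.ofFn z).prod i = (List.ofFn (fun k => z k i)).prod := by
      rw [show List.ofFn (fun k => z k i) = List.map (fun w => w i) (List.ofFn z) by
        rw [List.map_ofFn]; rfl]
      exact map_list_prod (Pi.evalRingHom A i) (List.ofFn z)
    simpa [condExp, hprod] using this
end

section
/- Assume in addition that each A_i is a unital *-algebra over ℂ, each φ_i satisfies φ_i(a*) = conj(φ_i(a)) for all a ∈ A_i, and A carries the componentwise involution. Let x = (a_i)_{i∈I} and y = (b_i)_{i∈I} be elements of A. Then the unital *-subalgebras of A generated by {x} ∪ ι(D) and by {y} ∪ ι(D) are free over D in (A, E) if and only if, for every i ∈ I, the unital *-subalgebras of A_i generated by a_i and by b_i are free in (A_i, φ_i). -/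
/-- Lemma B: projection of the big adjoin lands in the small adjoin. -/
lemma projB {I : Type*} {A : I → Type*} [∀ i, Ring (A i)]
    [∀ i, StarRing (A i)] [∀ i, Algebra ℂ (A i)] [∀ i, StarModule ℂ (A i)]
    (x : ∀ i, A i) (i : I) {z : ∀ i, A i}
    (hz : z ∈ StarAlgebra.adjoin ℂ ({x} ∪ Set.range (diag A))) :
    z i ∈ StarAlgebra.adjoin ℂ ({x i} : Set (A i)) := by
  induction hz using StarAlgebra.adjoin_induction with
  | mem w hw =>
    rcases hw with hw | ⟨d, rfl⟩
    · rw [Set.mem_singleton_iff] at hw; subst hw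
      exact StarAlgebra.subset_adjoin _ _ rfl
    · show d i • (1 : A i) ∈ _
      exact SMulMemClass.smul_mem _ (one_mem _)
  | algebraMap r => exact algebraMap_mem _ r
  | add _ _ _ _ h1 h2 => exact add_mem h1 h2
  | mul _ _ _ _ h1 h2 => exact mul_mem h1 h2
  | star _ _ h1 => exact star_mem h1

/-- Lemma A: an element of the small adjoin lifts to an element of the big
adjoin supported only at `i`. -/
lemma projA {I : Type*} {A : I → Type*} [∀ i, Ring (A i)]
    [∀ i, StarRing (A i)] [∀ i, Algebra ℂ (A i)] [∀ i, StarModule ℂ (A i)]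
    (x : ∀ i, A i) (i : I) {a : A i}
    (ha : a ∈ StarAlgebra.adjoin ℂ ({x i} : Set (A i))) :
    ∃ z ∈ StarAlgebra.adjoin ℂ ({x} ∪ Set.range (diag A)),
      z i = a ∧ ∀ j, j ≠ i → z j = 0 := by
  classical
  induction ha using StarAlgebra.adjoin_induction with
  | mem w hw =>
    rw [Set.mem_singleton_iff] at hw; subst hw
    refine ⟨diag A (fun j => if j = i then 1 else 0) * x, ?_, ?_, ?_⟩
    · exact mul_mem (StarAlgebra.subset_adjoin _ _ (Or.inr ⟨_, rfl⟩))
        (StarAlgebra.subset_adjoin _ _ (Or.inl rfl))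
    · show (if i = i then (1:ℂ) else 0) • (1 : A i) * x i = x i
      simp
    · intro j hj
      show (if j = i then (1:ℂ) else 0) • (1 : A j) * x j = 0
      simp [hj]
  | algebraMap r =>
    refine ⟨diag A (fun j => if j = i then r else 0),
      StarAlgebra.subset_adjoin _ _ (Or.inr ⟨_, rfl⟩), ?_, ?_⟩
    · show (if i = i then r else 0) • (1 : A i) = algebraMap ℂ (A i) r
      simp [Algebra.algebraMap_eq_smul_one]
    · intro j hj
      show (if j = i then r else 0) • (1 : A j) = 0
      simp [hj]
  | add u v _ _ h1 h2 =>
    obtain ⟨z1, hz1, hz1i, hz1j⟩ := h1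
    obtain ⟨z2, hz2, hz2i, hz2j⟩ := h2
    refine ⟨z1 + z2, add_mem hz1 hz2, by simp [hz1i, hz2i], fun j hj => by
      show z1 j + z2 j = 0
      simp [hz1j j hj, hz2j j hj]⟩
  | mul u v _ _ h1 h2 =>
    obtain ⟨z1, hz1, hz1i, hz1j⟩ := h1
    obtain ⟨z2, hz2, hz2i, hz2j⟩ := h2
    refine ⟨z1 * z2, mul_mem hz1 hz2, by simp [Pi.mul_apply, hz1i, hz2i],
      fun j hj => by show z1 j * z2 j = 0; simp [hz1j j hj]⟩
  | star u _ h1 =>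
    obtain ⟨z1, hz1, hz1i, hz1j⟩ := h1
    exact ⟨star z1, star_mem hz1, by simp [hz1i], fun j hj => by
      show star (z1 j) = 0; simp [hz1j j hj]⟩

lemma prod_apply' {I : Type*} {A : I → Type*} [∀ i, Ring (A i)] (i : I)
    (l : List (∀ i, A i)) : l.prod i = (l.map fun g => g i).prod := by
  induction l with
  | nil => rfl
  | cons a l ih => simp [ih]


/-- in the `*`-algebra setting (componentwise involution on `A`,
`φ_i(a*) = conj (φ_i a)`), the unital `*`-subalgebras of `A` generated by
`{x} ∪ ι(D)` and `{y} ∪ ι(D)` are free over `D` in `(A, E)` iff, for every `i`,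
the unital `*`-subalgebras of `A_i` generated by `x i` and by `y i` are free
in `(A_i, φ_i)`. -/
theorem starElemFreeOverD_iff_forall_starFreePair
    {I : Type*} [Nonempty I] {A : I → Type*} [∀ i, Ring (A i)]
    [∀ i, StarRing (A i)] [∀ i, Algebra ℂ (A i)] [∀ i, StarModule ℂ (A i)]
    (φ : ∀ i, A i →ₗ[ℂ] ℂ) (hφ : ∀ i, φ i 1 = 1)
    (hφstar : ∀ i (a : A i), φ i (star a) = starRingEnd ℂ (φ i a))
    (x y : ∀ i, A i) :
    FreeOverD φ
        (StarAlgebra.adjoin ℂ ({x} ∪ Set.range (diag A))).toSubalgebra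
        (StarAlgebra.adjoin ℂ ({y} ∪ Set.range (diag A))).toSubalgebra
      ↔ ∀ i, FreeSubalgebras (φ i)
          (StarAlgebra.adjoin ℂ ({x i} : Set (A i))).toSubalgebra
          (StarAlgebra.adjoin ℂ ({y i} : Set (A i))).toSubalgebra := by

  constructor
  · intro hfree i n hn b c hmem halt hcent
    have hex : ∀ k, ∃ z ∈ (if c k then
        (StarAlgebra.adjoin ℂ ({x} ∪ Set.range (diag A))).toSubalgebra
        else (StarAlgebra.adjoin ℂ ({y} ∪ Set.range (diag A))).toSubalgebra),
        z i = b k ∧ ∀ j, j ≠ i → z j = 0 := by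
      intro k
      have := hmem k
      cases hc : c k with
      | true =>
        rw [hc] at this; simp only [if_true] at this ⊢
        exact projA x i this
      | false =>
        rw [hc] at this; simp only [Bool.false_eq_true, if_false] at this ⊢
        exact projA y i this
    choose Z hZmem hZi hZj using hex
    have hEcent : ∀ k, condExp φ (Z k) = 0 := by
      intro k
      funext j
      by_cases hj : j = i
      · subst hj
        show φ j (Z k j) = 0
        rw [hZi k]
        exact hcent k
      · show φ j (Z k j) = 0
        rw [hZj k j hj, map_zero]
    have h0 := congrFun (hfree n hn Z c hZmem halt hEcent) i
    have : (List.ofFn Z).prod i = (List.ofFn b).prod := by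
      rw [prod_apply', List.map_ofFn]
      exact congrArg List.prod (congrArg List.ofFn (funext fun k => hZi k))
    show φ i (List.ofFn b).prod = 0
    rw [← this]
    exact h0
  · intro h n hn Y c hmem halt hcent
    funext i
    show φ i ((List.ofFn Y).prod i) = 0
    rw [prod_apply', List.map_ofFn]
    refine h i n hn (fun k => Y k i) c ?_ halt ?_
    · intro k
      have := hmem k
      cases hc : c k with
      | true =>
        rw [hc] at this; simp only [if_true] at this ⊢
        exact projB x i this
      | false =>
        rw [hc] at this; simp only [Bool.false_eq_true, if_false] at this ⊢
        exact projB y i this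
    · intro k
      exact congrFun (hcent k) i
end

section
/- For each i ∈ I let A_i' = {x ∈ A : x(k) = 0 for all k ≠ i} be the embedded copy of A_i in A, and let B_i be the unital subalgebra of A generated by A_i' ∪ ι(D). Then the family (B_i)_{i∈I} is mutually free over D in (A, E): for every n ≥ 1 and every sequence y₁, ..., yₙ with y_k ∈ B_{j_k}, consecutive indices j_k ≠ j_{k+1}, and E(y_k) = 0 for all k, one has E(y₁⋯yₙ) = 0. -/
/-- For `i ∈ I`, `B_i` is the unital subalgebra of `A` generated by the embedded copy
`A_i' = {x ∈ A : x k = 0 for all k ≠ i}` of `A_i` together with the diagonal `ι(D)`. -/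
def embeddedAlg {I : Type*} (A : I → Type*) [∀ i, Ring (A i)] [∀ i, Algebra ℂ (A i)]
    (i : I) : Subalgebra ℂ (∀ k, A k) :=
  Algebra.adjoin ℂ
    ({x : ∀ k, A k | ∀ k, k ≠ i → x k = 0} ∪ Set.range (diag A))

/-- Off the `i`-th coordinate, elements are scalars. -/
def offDiagScalar {I : Type*} (A : I → Type*) [∀ i, Ring (A i)] [∀ i, Algebra ℂ (A i)]
    (i : I) : Subalgebra ℂ (∀ k, A k) where
  carrier := {x | ∀ k, k ≠ i → ∃ c : ℂ, x k = algebraMap ℂ (A k) c}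
  mul_mem' := by
    rintro a b ha hb k hk
    obtain ⟨c, hc⟩ := ha k hk
    obtain ⟨d, hd⟩ := hb k hk
    exact ⟨c * d, by simp [Pi.mul_apply, hc, hd, map_mul]⟩
  add_mem' := by
    rintro a b ha hb k hk
    obtain ⟨c, hc⟩ := ha k hk
    obtain ⟨d, hd⟩ := hb k hk
    exact ⟨c + d, by simp [Pi.add_apply, hc, hd, map_add]⟩
  algebraMap_mem' := fun c k _ => ⟨c, rfl⟩

theorem embeddedAlg_le_offDiagScalar {I : Type*} (A : I → Type*) [∀ i, Ring (A i)]
    [∀ i, Algebra ℂ (A i)] (i : I) : embeddedAlg A i ≤ offDiagScalar A i := by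
  apply Algebra.adjoin_le
  rintro x (hx | ⟨d, rfl⟩)
  · intro k hk
    exact ⟨0, by simp [hx k hk]⟩
  · intro k _
    exact ⟨d k, by simp [diag, Algebra.algebraMap_eq_smul_one]⟩

/-- the family `(B_i)_{i ∈ I}` of embedded copies (together with the
diagonal) is mutually free over `D` in `(A, E)`: every alternating product of
`E`-centered elements is `E`-centered. -/
theorem embedded_copies_mutually_free_over_D
    {I : Type*} [Nonempty I] {A : I → Type*} [∀ i, Ring (A i)]
    [∀ i, Algebra ℂ (A i)] (φ : ∀ i, A i →ₗ[ℂ] ℂ) (hφ : ∀ i, φ i 1 = 1) :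
    ∀ (n : ℕ), 1 ≤ n → ∀ (y : Fin n → ∀ i, A i) (j : Fin n → I),
      (∀ k, y k ∈ embeddedAlg A (j k)) →
      (∀ (k : Fin n) (h : (k : ℕ) + 1 < n), j k ≠ j ⟨(k : ℕ) + 1, h⟩) →
      (∀ k, condExp φ (y k) = 0) →
      condExp φ (List.ofFn y).prod = 0 := by
  intro n hn y j hmem hneq hc
  -- centered elements vanish off their own coordinate
  have hzero : ∀ (m : Fin n) (k : I), k ≠ j m → y m k = 0 := by
    intro m k hk
    obtain ⟨c, hc'⟩ := embeddedAlg_le_offDiagScalar A (j m) (hmem m) k hk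
    have h0 : φ k (y m k) = 0 := congrFun (hc m) k
    rw [hc'] at h0
    rw [Algebra.algebraMap_eq_smul_one, map_smul, hφ k, smul_eq_mul, mul_one] at h0
    rw [hc', h0, map_zero]
  rcases n with _ | _ | n
  · omega
  · -- n = 1
    simpa [condExp, List.ofFn_succ] using hc 0
  · -- n ≥ 2 : the product vanishes at every coordinate
    funext i
    have hprod : (List.ofFn y).prod i = 0 := by
      rw [Pi.list_prod_apply, List.map_ofFn]
      apply List.prod_eq_zero
      by_cases h0 : j 0 = i
      · have h01 : j 0 ≠ j 1 := by simpa using hneq 0 (by simp)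
        have h1 : j 1 ≠ i := fun h => h01 (h0.trans h.symm)
        have h2 := hzero 1 i (Ne.symm h1)
        rw [← h2]
        exact List.mem_ofFn.mpr ⟨1, rfl⟩
      · have h2 := hzero 0 i (Ne.symm h0)
        rw [← h2]
        exact List.mem_ofFn.mpr ⟨0, rfl⟩
    simp only [condExp, hprod, map_zero, Pi.zero_apply]
end

section
/- Let W₁ and W₂ be subsets of I, and for m = 1, 2 let B_m be the unital subalgebra of A generated by ι(D) ∪ {x ∈ A : x(i) = 0 for all i ∉ W_m}. Suppose there exist i₀ ∈ W₁ ∩ W₂ and an element a ∈ A_{i₀} with φ_{i₀}(a²) ≠ φ_{i₀}(a)². Then B₁ and B₂ are NOT free over D in (A, E). -/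
/-- The unital subalgebra of `A` generated by the diagonal `ι(D)` together with all
tuples supported in `W ⊆ I`. -/
def supportedAlg {I : Type*} (A : I → Type*) [∀ i, Ring (A i)] [∀ i, Algebra ℂ (A i)]
    (W : Set I) : Subalgebra ℂ (∀ i, A i) :=
  Algebra.adjoin ℂ
    (Set.range (diag A) ∪ {x : ∀ i, A i | ∀ i ∉ W, x i = 0})

/-- if `W₁` and `W₂` share a common index `i₀` at which some element
`a ∈ A_{i₀}` satisfies `φ_{i₀}(a²) ≠ φ_{i₀}(a)²`, then the subalgebras generated by
`ι(D)` and the tuples supported in `W₁`, resp. `W₂`, are NOT free over `D`. -/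
theorem supportedAlg_not_free_of_common_vertex
    {I : Type*} [Nonempty I] {A : I → Type*} [∀ i, Ring (A i)]
    [∀ i, Algebra ℂ (A i)] (φ : ∀ i, A i →ₗ[ℂ] ℂ) (hφ : ∀ i, φ i 1 = 1)
    (W₁ W₂ : Set I) (i₀ : I) (hi₁ : i₀ ∈ W₁) (hi₂ : i₀ ∈ W₂)
    (a : A i₀) (ha : φ i₀ (a ^ 2) ≠ (φ i₀ a) ^ 2) :
    ¬ FreeOverD φ (supportedAlg A W₁) (supportedAlg A W₂) := by
  classical
  intro hfree
  set b : A i₀ := a - (φ i₀ a) • 1 with hb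
  set y : ∀ i, A i := Pi.single i₀ b with hy
  have hmem : ∀ W : Set I, i₀ ∈ W → y ∈ supportedAlg A W := by
    intro W hW
    apply Algebra.subset_adjoin
    right
    intro i hi
    have : i ≠ i₀ := fun h => hi (h ▸ hW)
    simp [hy, Pi.single_eq_of_ne this]
  have hE : condExp φ y = 0 := by
    funext i
    by_cases h : i = i₀
    · subst h
      simp [condExp, hy, hb, map_sub, map_smul, hφ, smul_eq_mul]
    · simp [condExp, hy, Pi.single_eq_of_ne h]
  have key := hfree 2 (by norm_num) ![y, y] ![true, false]
    (by
      intro k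
      fin_cases k
      · simpa using hmem W₁ hi₁
      · simpa using hmem W₂ hi₂)
    (by
      intro k hk
      fin_cases k
      · simp
      · exact absurd hk (by norm_num))
    (by intro k; fin_cases k <;> simpa using hE)
  have hprod : (List.ofFn ![y, y]).prod = y * y := by
    simp [List.ofFn_succ]
  rw [hprod] at key
  have key0 := congrFun key i₀
  have hyy : (y * y) i₀ = b * b := by simp [hy]
  rw [condExp] at key0
  simp only [hyy, Pi.zero_apply] at key0
  apply ha
  have expand : b * b = a * a - (φ i₀ a) • a - (φ i₀ a) • a
      + ((φ i₀ a) * (φ i₀ a)) • (1 : A i₀) := by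
    simp only [hb, sub_mul, mul_sub, smul_mul_assoc, mul_smul_comm, one_mul,
      mul_one, smul_smul, smul_sub]
    abel
  rw [expand] at key0
  simp only [map_add, map_sub, map_smul, smul_eq_mul, hφ, mul_one] at key0
  rw [pow_two, pow_two]
  linear_combination key0
end

section
/- Fix w ∈ I and elements a, b ∈ A_w, and let x ∈ A be the tuple with x(w) = a and x(k) = 0 for all k ≠ w, and y ∈ A the tuple with y(w) = b and y(k) = 0 for all k ≠ w. Then x and y are free over D in (A, E) if and only if a and b are free in the noncommutative probability space (A_w, φ_w). -/
lemma aux_single_mem {I : Type*} [DecidableEq I] {A : I → Type*} [∀ i, Ring (A i)]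
    [∀ i, Algebra ℂ (A i)] (w : I) (v : A w) {z : A w}
    (hz : z ∈ Algebra.adjoin ℂ {v}) :
    Pi.single w z ∈ Algebra.adjoin ℂ ({Pi.single w v} ∪ Set.range (diag A)) := by
  induction hz using Algebra.adjoin_induction with
  | mem x hx =>
      rcases hx with rfl
      exact Algebra.subset_adjoin (Or.inl rfl)
  | algebraMap r =>
      have h1 : Pi.single w (algebraMap ℂ (A w) r) = r • diag A (Pi.single w (1:ℂ)) := by
        funext i
        by_cases h : i = w
        · subst h
          simp [diag, Algebra.algebraMap_eq_smul_one]
        · simp [diag, Pi.single_eq_of_ne h]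
      rw [h1]
      refine Subalgebra.smul_mem _ ?_ r
      exact Algebra.subset_adjoin (Or.inr ⟨_, rfl⟩)
  | add x y hx hy ihx ihy => rw [Pi.single_add]; exact add_mem ihx ihy
  | mul x y hx hy ihx ihy => rw [Pi.single_mul]; exact mul_mem ihx ihy

lemma aux_struct {I : Type*} [DecidableEq I] {A : I → Type*} [∀ i, Ring (A i)]
    [∀ i, Algebra ℂ (A i)] (w : I) (v : A w) {x : ∀ i, A i}
    (hx : x ∈ Algebra.adjoin ℂ ({Pi.single w v} ∪ Set.range (diag A))) :
    x w ∈ Algebra.adjoin ℂ {v} ∧ ∀ i, i ≠ w → ∃ c : ℂ, x i = c • 1 := by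
  induction hx using Algebra.adjoin_induction with
  | mem x hx =>
      rcases hx with rfl | ⟨d, rfl⟩
      · constructor
        · rw [Pi.single_eq_same]
          exact Algebra.self_mem_adjoin_singleton ℂ v
        · exact fun i hi => ⟨0, by rw [Pi.single_eq_of_ne hi, zero_smul]⟩
      · refine ⟨?_, fun i hi => ⟨d i, rfl⟩⟩
        have h2 : diag A d w = algebraMap ℂ (A w) (d w) := by
          simp [diag, Algebra.algebraMap_eq_smul_one]
        rw [h2]
        exact Subalgebra.algebraMap_mem _ _
  | algebraMap r =>
      constructor
      · show algebraMap ℂ (A w) r ∈ _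
        exact Subalgebra.algebraMap_mem _ _
      · intro i hi
        exact ⟨r, (Algebra.algebraMap_eq_smul_one r)⟩
  | add x y hx hy ihx ihy =>
      refine ⟨add_mem ihx.1 ihy.1, fun i hi => ?_⟩
      obtain ⟨c, hc⟩ := ihx.2 i hi
      obtain ⟨c', hc'⟩ := ihy.2 i hi
      exact ⟨c + c', by rw [Pi.add_apply, hc, hc', add_smul]⟩
  | mul x y hx hy ihx ihy =>
      refine ⟨mul_mem ihx.1 ihy.1, fun i hi => ?_⟩
      obtain ⟨c, hc⟩ := ihx.2 i hi
      obtain ⟨c', hc'⟩ := ihy.2 i hi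
      exact ⟨c * c', by rw [Pi.mul_apply, hc, hc', smul_mul_smul_comm, one_mul]⟩

/-- the tuples supported at the same index `w` with values `a, b ∈ A_w`
are free over `D` in `(A, E)` iff `a` and `b` are free in `(A_w, φ_w)`. -/
theorem single_same_index_free_iff
    {I : Type*} [Nonempty I] [DecidableEq I] {A : I → Type*} [∀ i, Ring (A i)]
    [∀ i, Algebra ℂ (A i)] (φ : ∀ i, A i →ₗ[ℂ] ℂ) (hφ : ∀ i, φ i 1 = 1)
    (w : I) (a b : A w) :
    ElemFreeOverD φ (Pi.single w a) (Pi.single w b) ↔ FreePair (φ w) a b := by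
  constructor
  · intro H n hn y c hmem halt hcent
    have hY : ∀ k, (Pi.single w (y k) : ∀ i, A i) ∈
        (if c k then Algebra.adjoin ℂ ({Pi.single w a} ∪ Set.range (diag A))
         else Algebra.adjoin ℂ ({Pi.single w b} ∪ Set.range (diag A))) := by
      intro k
      have hk := hmem k
      cases hck : c k <;> simp only [hck, if_true, if_false] at hk ⊢
      · exact aux_single_mem w b hk
      · exact aux_single_mem w a hk
    have hC : ∀ k, condExp φ (Pi.single w (y k) : ∀ i, A i) = 0 := by
      intro k
      funext i
      by_cases hiw : i = w
      · subst hiw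
        simp [condExp, hcent k]
      · simp [condExp, Pi.single_eq_of_ne hiw]
    have key := H n hn (fun k => Pi.single w (y k)) c hY halt hC
    have hw := congrFun key w
    have hprod : ((List.ofFn fun k => (Pi.single w (y k) : ∀ i, A i)).prod) w
        = (List.ofFn y).prod := by
      rw [Pi.list_prod_apply, List.map_ofFn]
      simp [Function.comp_def]
    simpa [condExp, hprod] using hw
  · intro H n hn Y c hmem halt hcent
    have hstr : ∀ k, (Y k w ∈ (if c k then Algebra.adjoin ℂ {a} else Algebra.adjoin ℂ {b}))
        ∧ ∀ i, i ≠ w → ∃ cc : ℂ, Y k i = cc • 1 := by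
      intro k
      have hk := hmem k
      cases hck : c k <;> simp only [hck, if_true, if_false] at hk ⊢
      · exact aux_struct w b hk
      · exact aux_struct w a hk
    have hz : ∀ k i, i ≠ w → Y k i = 0 := by
      intro k i hi
      obtain ⟨cc, hcc⟩ := (hstr k).2 i hi
      have h0 := congrFun (hcent k) i
      simp only [condExp, hcc, map_smul, hφ i, smul_eq_mul, mul_one, Pi.zero_apply] at h0
      rw [hcc, h0, zero_smul]
    funext i
    have hpa : ((List.ofFn Y).prod) i = (List.ofFn fun k => Y k i).prod := by
      rw [Pi.list_prod_apply, List.map_ofFn]; rfl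
    by_cases hiw : i = w
    · subst hiw
      have h5 := H n hn (fun k => Y k i) c (fun k => (hstr k).1) halt
        (fun k => by simpa [condExp] using congrFun (hcent k) i)
      simp only [Pi.zero_apply]
      show φ i ((List.ofFn Y).prod i) = 0
      rw [hpa]
      exact h5
    · obtain ⟨m, rfl⟩ := Nat.exists_eq_succ_of_ne_zero (by omega : n ≠ 0)
      have h6 : (List.ofFn fun k => Y k i).prod = 0 := by
        rw [List.ofFn_succ, List.prod_cons, hz _ i hiw, zero_mul]
      simp only [Pi.zero_apply]
      show φ i ((List.ofFn Y).prod i) = 0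
      rw [hpa, h6, map_zero]
end

section
/- Assume the index set I is finite and let x = (a_i)_{i∈I} ∈ A. Then the unital subalgebra of A generated by {x} ∪ ι(D) equals the set {y ∈ A : y(i) ∈ Alg(a_i) for every i ∈ I}, where Alg(a_i) denotes the unital subalgebra of A_i generated by a_i. -/
/-- for a finite index set `I` and `x = (a_i)_{i∈I} ∈ A`, the unital
subalgebra of `A` generated by `{x} ∪ ι(D)` is exactly the set of tuples `y` with
`y i ∈ Alg(a_i)` for every `i`, where `Alg(a_i)` is the unital subalgebra of `A_i`
generated by `a_i`. -/
theorem adjoin_single_with_diag_eq_pi_adjoin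
    {I : Type*} [Nonempty I] [Finite I] {A : I → Type*} [∀ i, Ring (A i)]
    [∀ i, Algebra ℂ (A i)] (x : ∀ i, A i) :
    (Algebra.adjoin ℂ ({x} ∪ Set.range (diag A)) : Set (∀ i, A i))
      = {y : ∀ i, A i | ∀ i, y i ∈ Algebra.adjoin ℂ ({x i} : Set (A i))} := by
  classical
  have := Fintype.ofFinite I
  apply Set.Subset.antisymm
  · intro y hy
    refine Algebra.adjoin_induction (hx := hy) ?_ ?_ ?_ ?_
    · rintro z (rfl | ⟨d, rfl⟩) i
      · exact Algebra.self_mem_adjoin_singleton ℂ (z i)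
      · exact Subalgebra.smul_mem (Algebra.adjoin ℂ {x i}) (Subalgebra.one_mem _) (d i)
    · intro c i
      exact Subalgebra.algebraMap_mem _ c
    · intro a b _ _ ha hb i
      exact Subalgebra.add_mem _ (ha i) (hb i)
    · intro a b _ _ ha hb i
      exact Subalgebra.mul_mem _ (ha i) (hb i)
  · intro y hy
    -- choose polynomials
    have hp : ∀ i, ∃ p : Polynomial ℂ, Polynomial.aeval (x i) p = y i := by
      intro i
      have := hy i
      rw [Algebra.adjoin_singleton_eq_range_aeval] at this
      exact this
    choose p hpe using hp
    set S := Algebra.adjoin ℂ ({x} ∪ Set.range (diag A)) with hS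
    have hxS : x ∈ S := Algebra.subset_adjoin (Or.inl rfl)
    have haev : ∀ q : Polynomial ℂ, Polynomial.aeval x q ∈ S := by
      intro q
      have : Polynomial.aeval x q = S.val (Polynomial.aeval (⟨x, hxS⟩ : S) q) := by
        rw [← Polynomial.aeval_algHom_apply]
        rfl
      rw [this]
      exact (Polynomial.aeval (⟨x, hxS⟩ : S) q).2
    have hdiag : ∀ d : I → ℂ, diag A d ∈ S :=
      fun d => Algebra.subset_adjoin (Or.inr ⟨d, rfl⟩)
    have hy2 : y = ∑ i : I, diag A (Pi.single i (1 : ℂ)) * Polynomial.aeval x (p i) := by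
      funext j
      rw [Finset.sum_apply]
      rw [Finset.sum_eq_single j]
      · have : (Polynomial.aeval x (p j)) j = Polynomial.aeval (x j) (p j) :=
          (Polynomial.aeval_algHom_apply (Pi.evalAlgHom ℂ A j) x (p j)).symm
        simp [diag, Pi.mul_apply, this, hpe]
      · intro i _ hij
        simp [diag, Pi.mul_apply, Pi.single_eq_of_ne (Ne.symm hij)]
      · intro h; exact absurd (Finset.mem_univ j) h
    rw [hy2]
    exact Subalgebra.sum_mem _ fun i _ => Subalgebra.mul_mem _ (hdiag _) (haev _)
end
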